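/- arXiv:2511.04273 — 3 statements merged into one kernel-verified Lean document; each statement's English description precedes it below -/
import Mathlib

section
/- Let ε be a random vector with independent coordinates, Θ invertible, η = Θε, and P_j = Θ_{·j} Θ^{-1}_{j·}. Then the characteristic function of η satisfies the functional equation φ_η(s) = ∏_{j=1}^n φ_η(s P_j) for all row vectors s. -/
open Matrix MeasureTheory ProbabilityTheory

-- complex integral_mul for independent functions
lemma indepFun_integral_complex_mul {Ω : Type*} [MeasurableSpace Ω] {μ : Measure Ω}
    {X Y : Ω → ℂ} (h : IndepFun X Y μ) (hX : Integrable X μ) (hY : Integrable Y μ) :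
    ∫ ω, X ω * Y ω ∂μ = (∫ ω, X ω ∂μ) * ∫ ω, Y ω ∂μ := by
  have hXr : Integrable (fun ω => (X ω).re) μ := hX.re
  have hXi : Integrable (fun ω => (X ω).im) μ := hX.im
  have hYr : Integrable (fun ω => (Y ω).re) μ := hY.re
  have hYi : Integrable (fun ω => (Y ω).im) μ := hY.im
  have h1 : IndepFun (fun ω => (X ω).re) (fun ω => (Y ω).re) μ :=
    h.comp Complex.measurable_re Complex.measurable_re
  have h2 : IndepFun (fun ω => (X ω).re) (fun ω => (Y ω).im) μ :=
    h.comp Complex.measurable_re Complex.measurable_im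
  have h3 : IndepFun (fun ω => (X ω).im) (fun ω => (Y ω).re) μ :=
    h.comp Complex.measurable_im Complex.measurable_re
  have h4 : IndepFun (fun ω => (X ω).im) (fun ω => (Y ω).im) μ :=
    h.comp Complex.measurable_im Complex.measurable_im
  have i1 : Integrable (fun ω => (X ω).re * (Y ω).re) μ := h1.integrable_mul hXr hYr
  have i2 : Integrable (fun ω => (X ω).re * (Y ω).im) μ := h2.integrable_mul hXr hYi
  have i3 : Integrable (fun ω => (X ω).im * (Y ω).re) μ := h3.integrable_mul hXi hYr
  have i4 : Integrable (fun ω => (X ω).im * (Y ω).im) μ := h4.integrable_mul hXi hYi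
  have e1 := h1.integral_fun_mul_eq_mul_integral hXr.1 hYr.1
  have e2 := h2.integral_fun_mul_eq_mul_integral hXr.1 hYi.1
  have e3 := h3.integral_fun_mul_eq_mul_integral hXi.1 hYr.1
  have e4 := h4.integral_fun_mul_eq_mul_integral hXi.1 hYi.1
  have key : ∀ ω, X ω * Y ω =
      (((X ω).re * (Y ω).re - (X ω).im * (Y ω).im : ℝ) : ℂ) +
        (((X ω).re * (Y ω).im + (X ω).im * (Y ω).re : ℝ) : ℂ) * Complex.I := by
    intro ω
    apply Complex.ext <;> simp [Complex.mul_re, Complex.mul_im]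
  have hXeq := integral_re_add_im hX
  have hYeq := integral_re_add_im hY
  simp only [RCLike.re_to_complex, RCLike.im_to_complex, RCLike.I_to_complex, Complex.coe_algebraMap] at hXeq hYeq
  rw [← hXeq, ← hYeq]
  calc ∫ ω, X ω * Y ω ∂μ
      = ∫ ω, ((((X ω).re * (Y ω).re - (X ω).im * (Y ω).im : ℝ) : ℂ) +
          (((X ω).re * (Y ω).im + (X ω).im * (Y ω).re : ℝ) : ℂ) * Complex.I) ∂μ := by
        exact integral_congr_ae (Filter.Eventually.of_forall key)
    _ = (((∫ ω, ((X ω).re * (Y ω).re - (X ω).im * (Y ω).im) ∂μ : ℝ)) : ℂ) +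
          ((∫ ω, ((X ω).re * (Y ω).im + (X ω).im * (Y ω).re) ∂μ : ℝ) : ℂ) * Complex.I := by
        have ia : Integrable (fun ω => (((X ω).re * (Y ω).re - (X ω).im * (Y ω).im : ℝ) : ℂ)) μ :=
          (i1.sub i4).ofReal
        have ib : Integrable (fun ω =>
            (((X ω).re * (Y ω).im + (X ω).im * (Y ω).re : ℝ) : ℂ) * Complex.I) μ :=
          ((i2.add i3).ofReal).mul_const Complex.I
        have hu : ∫ ω, (((X ω).re * (Y ω).re - (X ω).im * (Y ω).im : ℝ) : ℂ) ∂μ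
            = ((∫ ω, ((X ω).re * (Y ω).re - (X ω).im * (Y ω).im) ∂μ : ℝ) : ℂ) := integral_ofReal
        have hv : ∫ ω, (((X ω).re * (Y ω).im + (X ω).im * (Y ω).re : ℝ) : ℂ) ∂μ
            = ((∫ ω, ((X ω).re * (Y ω).im + (X ω).im * (Y ω).re) ∂μ : ℝ) : ℂ) := integral_ofReal
        rw [integral_add ia ib, integral_mul_const, hu, hv]
    _ = _ := by
        rw [integral_sub i1 i4, integral_add i2 i3, e1, e2, e3, e4]
        push_cast
        ring_nf
        rw [Complex.I_sq]
        ring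

lemma integrable_cexp_I_mul {Ω : Type*} [MeasurableSpace Ω] {μ : Measure Ω}
    [IsProbabilityMeasure μ] {f : Ω → ℝ} (hf : Measurable f) :
    Integrable (fun ω => Complex.exp (Complex.I * (f ω : ℂ))) μ := by
  refine Integrable.mono' (integrable_const 1) ?_ ?_
  · exact ((Complex.measurable_ofReal.comp hf).const_mul Complex.I).cexp.aestronglyMeasurable
  · refine Filter.Eventually.of_forall fun ω => ?_
    simp [Complex.norm_exp]

lemma integral_cexp_I_mul_sum {Ω : Type*} [MeasurableSpace Ω] {μ : Measure Ω}
    [IsProbabilityMeasure μ] {ι : Type*} (X : ι → Ω → ℝ)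
    (hindep : iIndepFun X μ) (hmeas : ∀ i, Measurable (X i))
    (t : Finset ι) :
    ∫ ω, Complex.exp (Complex.I * ((∑ j ∈ t, X j ω : ℝ) : ℂ)) ∂μ
      = ∏ j ∈ t, ∫ ω, Complex.exp (Complex.I * ((X j ω : ℝ) : ℂ)) ∂μ := by
  classical
  induction t using Finset.induction_on with
  | empty => simp
  | insert i t hi ih =>
    have hsum : Measurable (fun ω => ∑ j ∈ t, X j ω) := by
      exact Finset.measurable_sum t fun j _ => hmeas j
    have hI : IndepFun (∑ j ∈ t, X j) (X i) μ :=
      hindep.indepFun_finsetSum_of_notMem hmeas hi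
    have hI' : IndepFun (fun ω => Complex.exp (Complex.I * ((X i ω : ℝ) : ℂ)))
        (fun ω => Complex.exp (Complex.I * ((∑ j ∈ t, X j ω : ℝ) : ℂ))) μ := by
      have := hI.symm.comp (φ := fun x : ℝ => Complex.exp (Complex.I * (x : ℂ)))
        (ψ := fun x : ℝ => Complex.exp (Complex.I * (x : ℂ)))
        ((Complex.measurable_ofReal.const_mul Complex.I).cexp)
        ((Complex.measurable_ofReal.const_mul Complex.I).cexp)
      simpa [Function.comp_def, Finset.sum_apply] using this
    have key : ∀ ω, Complex.exp (Complex.I * ((∑ j ∈ insert i t, X j ω : ℝ) : ℂ))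
        = Complex.exp (Complex.I * ((X i ω : ℝ) : ℂ))
          * Complex.exp (Complex.I * ((∑ j ∈ t, X j ω : ℝ) : ℂ)) := by
      intro ω
      rw [Finset.sum_insert hi, ← Complex.exp_add]
      push_cast
      ring_nf
    rw [Finset.prod_insert hi, ← ih]
    calc ∫ ω, Complex.exp (Complex.I * ((∑ j ∈ insert i t, X j ω : ℝ) : ℂ)) ∂μ
        = ∫ ω, Complex.exp (Complex.I * ((X i ω : ℝ) : ℂ))
            * Complex.exp (Complex.I * ((∑ j ∈ t, X j ω : ℝ) : ℂ)) ∂μ :=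
          integral_congr_ae (Filter.Eventually.of_forall key)
      _ = _ := indepFun_integral_complex_mul hI'
            (integrable_cexp_I_mul (hmeas i)) (integrable_cexp_I_mul hsum)


open Matrix MeasureTheory ProbabilityTheory

theorem charFun_functional_equation {n : ℕ} {Ω : Type*} [MeasurableSpace Ω]
    (μ : Measure Ω) [IsProbabilityMeasure μ]
    (ε : Ω → Fin n → ℝ) (hmeas : ∀ j, Measurable fun ω => ε ω j)
    (hindep : iIndepFun (fun j ω => ε ω j) μ)
    (Θ : Matrix (Fin n) (Fin n) ℝ) [Invertible Θ]
    (P : Fin n → Matrix (Fin n) (Fin n) ℝ)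
    (hP : ∀ j, P j = Matrix.of fun i k => Θ i j * Θ⁻¹ j k)
    (φ : (Fin n → ℝ) → ℂ)
    (hφ : ∀ s, φ s = ∫ ω, Complex.exp (Complex.I * ((s ⬝ᵥ Θ.mulVec (ε ω) : ℝ) : ℂ)) ∂μ)
    (s : Fin n → ℝ) :
    φ s = ∏ j, φ (Matrix.vecMul s (P j)) := by
  set c : Fin n → ℝ := Matrix.vecMul s Θ with hc
  -- P j * Θ
  have hPΘ : ∀ j, P j * Θ = Matrix.of fun i k => Θ i j * (1 : Matrix (Fin n) (Fin n) ℝ) j k := by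
    intro j
    ext i k
    rw [hP]
    simp only [Matrix.mul_apply, Matrix.of_apply]
    rw [← Matrix.inv_mul_of_invertible Θ]
    simp [Matrix.mul_apply, mul_assoc, ← Finset.mul_sum]
  have key2 : ∀ (j : Fin n) (x : Fin n → ℝ),
      Matrix.vecMul s (P j) ⬝ᵥ Θ.mulVec x = c j * x j := by
    intro j x
    rw [Matrix.dotProduct_mulVec, Matrix.vecMul_vecMul, hPΘ j]
    have hv : Matrix.vecMul s (Matrix.of fun i k => Θ i j * (1 : Matrix (Fin n) (Fin n) ℝ) j k)
        = Pi.single j (c j) := by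
      ext k
      simp only [Matrix.vecMul, dotProduct, Matrix.of_apply, Matrix.one_apply,
        Pi.single_apply, hc]
      by_cases hjk : j = k
      · subst hjk
        simp [Matrix.vecMul, dotProduct]
      · simp [hjk, Ne.symm hjk]
    rw [hv]
    simp [single_dotProduct]
  have key1 : ∀ x : Fin n → ℝ, s ⬝ᵥ Θ.mulVec x = ∑ j, c j * x j := by
    intro x
    rw [Matrix.dotProduct_mulVec]
    rfl
  -- the scaled coordinates
  set X : Fin n → Ω → ℝ := fun j ω => c j * ε ω j with hX
  have hXmeas : ∀ j, Measurable (X j) := fun j => (hmeas j).const_mul _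
  have hXindep : iIndepFun X μ := by
    have := hindep.comp (fun j (x : ℝ) => c j * x) (fun j => measurable_id.const_mul _)
    simpa [Function.comp_def] using this
  have main := integral_cexp_I_mul_sum X hXindep hXmeas Finset.univ
  rw [hφ s]
  have lhs_eq : ∀ ω, ((s ⬝ᵥ Θ.mulVec (ε ω) : ℝ) : ℂ) = ((∑ j, X j ω : ℝ) : ℂ) := by
    intro ω; rw [key1]
  calc ∫ ω, Complex.exp (Complex.I * ((s ⬝ᵥ Θ.mulVec (ε ω) : ℝ) : ℂ)) ∂μ
      = ∫ ω, Complex.exp (Complex.I * ((∑ j, X j ω : ℝ) : ℂ)) ∂μ := by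
        exact integral_congr_ae (Filter.Eventually.of_forall fun ω =>
          congrArg Complex.exp (congrArg (Complex.I * ·) (lhs_eq ω)))
    _ = ∏ j, ∫ ω, Complex.exp (Complex.I * ((X j ω : ℝ) : ℂ)) ∂μ := main
    _ = ∏ j, φ (Matrix.vecMul s (P j)) := by
        refine Finset.prod_congr rfl fun j _ => ?_
        rw [hφ (Matrix.vecMul s (P j))]
        refine (integral_congr_ae (Filter.Eventually.of_forall fun ω => ?_)).symm
        exact congrArg Complex.exp (congrArg (Complex.I * ·)
          (congrArg Complex.ofReal (key2 j (ε ω))))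
end

section
/- Let Θ be a 2×2 matrix with columns (cos θ_1, sin θ_1)ᵀ and (cos θ_2, sin θ_2)ᵀ where the angle between the columns is at least ε > 0 (i.e., the absolute value of the angular difference θ_2 − θ_1 modulo π lies in [ε, π − ε]). Then the operator norm of P_1 = Θ_{·1} Θ^{-1}_{1·} is at most 1/sin(ε). -/
open Matrix Real

theorem P1_opNorm_bound (θ₁ θ₂ ε : ℝ) (hε : 0 < ε) (hε' : ε < Real.pi / 2)
    (hinv : Real.sin ε ≤ |Real.sin (θ₂ - θ₁)|)
    (Θ : Matrix (Fin 2) (Fin 2) ℝ)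
    (hΘ : Θ = !![Real.cos θ₁, Real.cos θ₂; Real.sin θ₁, Real.sin θ₂])
    (P₁ : Matrix (Fin 2) (Fin 2) ℝ)
    (hP₁ : P₁ = Matrix.of fun i k => Θ i 0 * Θ⁻¹ 0 k) :
    ‖(Matrix.toEuclideanCLM (𝕜 := ℝ) P₁ :
        EuclideanSpace ℝ (Fin 2) →L[ℝ] EuclideanSpace ℝ (Fin 2))‖ ≤ 1 / Real.sin ε := by
  have hsε : 0 < Real.sin ε := Real.sin_pos_of_pos_of_lt_pi hε (by linarith [Real.pi_pos])
  set d : ℝ := Real.sin (θ₂ - θ₁) with hd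
  have hdabs : 0 < |d| := lt_of_lt_of_le hsε hinv
  have hd0 : d ≠ 0 := fun h => by simp [h] at hdabs
  have hdet : Θ.det = d := by
    rw [hΘ, Matrix.det_fin_two_of, hd, Real.sin_sub]; ring
  have hdet0 : Θ.det ≠ 0 := hdet ▸ hd0
  -- entries of Θ⁻¹ first row
  have hinv00 : Θ⁻¹ 0 0 = d⁻¹ * Real.sin θ₂ := by
    rw [Matrix.inv_def, hdet]
    simp [hΘ, Matrix.adjugate_fin_two_of]
  have hinv01 : Θ⁻¹ 0 1 = d⁻¹ * (-Real.cos θ₂) := by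
    rw [Matrix.inv_def, hdet]
    simp [hΘ, Matrix.adjugate_fin_two_of]
  set u : EuclideanSpace ℝ (Fin 2) := (WithLp.equiv 2 (Fin 2 → ℝ)).symm ![Real.cos θ₁, Real.sin θ₁] with hu
  set v : EuclideanSpace ℝ (Fin 2) := (WithLp.equiv 2 (Fin 2 → ℝ)).symm ![Θ⁻¹ 0 0, Θ⁻¹ 0 1] with hv
  have key : (Matrix.toEuclideanCLM (𝕜 := ℝ) P₁ :
      EuclideanSpace ℝ (Fin 2) →L[ℝ] EuclideanSpace ℝ (Fin 2)) =
      ContinuousLinearMap.smulRight (innerSL ℝ v) u := by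
    ext x i
    have h1 : (Matrix.toEuclideanCLM (𝕜 := ℝ) P₁) x i
        = (P₁ *ᵥ (WithLp.equiv 2 (Fin 2 → ℝ) x)) i :=
      congrFun (Matrix.ofLp_toEuclideanCLM P₁ x) i
    rw [h1]
    simp only [ContinuousLinearMap.smulRight_apply, innerSL_apply_apply, WithLp.ofLp_smul]
    rw [real_inner_comm]
    simp only [Matrix.mulVec, hP₁, Matrix.of_apply, hv, hu]
    rw [EuclideanSpace.inner_eq_star_dotProduct]
    simp only [dotProduct, Fin.sum_univ_two, Pi.smul_apply, smul_eq_mul,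
      WithLp.equiv_symm_apply, WithLp.ofLp_toLp, WithLp.equiv_apply]
    fin_cases i <;>
      simp [hΘ, dotProduct, Fin.sum_univ_two] <;> ring
  rw [key, ContinuousLinearMap.norm_smulRight_apply, innerSL_apply_norm]
  have hnu : ‖u‖ = 1 := by
    rw [EuclideanSpace.norm_eq]
    simp only [hu, WithLp.equiv_symm_apply, WithLp.ofLp_toLp, Fin.sum_univ_two, Matrix.cons_val_zero,
      Matrix.cons_val_one, Matrix.head_cons, Real.norm_eq_abs, sq_abs]
    rw [Real.cos_sq_add_sin_sq, Real.sqrt_one]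
  have hnv : ‖v‖ = 1 / |d| := by
    rw [EuclideanSpace.norm_eq]
    simp only [hv, WithLp.equiv_symm_apply, WithLp.ofLp_toLp, Fin.sum_univ_two, Matrix.cons_val_zero,
      Matrix.cons_val_one, Matrix.head_cons, hinv00, hinv01]
    have : (d⁻¹ * Real.sin θ₂) ^ 2 + (d⁻¹ * -Real.cos θ₂) ^ 2 = (d⁻¹) ^ 2 := by
      have := Real.sin_sq_add_cos_sq θ₂; nlinarith [this]
    rw [show ‖d⁻¹ * Real.sin θ₂‖ ^ 2 + ‖d⁻¹ * -Real.cos θ₂‖ ^ 2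
        = (d⁻¹) ^ 2 by rw [Real.norm_eq_abs, Real.norm_eq_abs, sq_abs, sq_abs]; exact this]
    rw [Real.sqrt_sq_eq_abs, abs_inv, one_div]
  rw [hnu, hnv, mul_one]
  rw [div_le_div_iff₀ hdabs hsε]
  simpa using hinv
end

section
/- Let η be an R^n-valued random vector whose characteristic function φ never vanishes, generated as η = Θε with ε having independent coordinates and Θ invertible, and let P_j = Θ_{·j} Θ^{-1}_{j·}. Then, choosing a continuous branch of the logarithm of φ with log φ(0) = 0, one has log φ(s) = ∑_{j=1}^n log φ(s P_j) for all s; equivalently ∑_{j=0}^n a_j log φ(s P_j) = 0 where P_0 = I, a_0 = 1 and a_j = −1 for j ≥ 1. -/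
open Matrix MeasureTheory ProbabilityTheory

/-- A continuous function on a preconnected space whose values are integer multiples of `2π`
(as imaginary parts of `2πi`-multiples) and which vanishes at a point is identically zero. -/
lemma aux_int_valued_zero {X : Type*} [TopologicalSpace X] [PreconnectedSpace X]
    (h : X → ℝ) (hc : Continuous h) (hint : ∀ x, ∃ k : ℤ, h x = k)
    (x0 : X) (h0 : h x0 = 0) : ∀ x, h x = 0 := by
  intro x
  by_contra hne
  obtain ⟨k, hk⟩ := hint x
  have himg : IsPreconnected (h '' Set.univ) :=
    (isPreconnected_univ).image h hc.continuousOn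
  have hord := himg.ordConnected
  have h0mem : (0 : ℝ) ∈ h '' Set.univ := ⟨x0, Set.mem_univ _, h0⟩
  have hxmem : h x ∈ h '' Set.univ := ⟨x, Set.mem_univ _, rfl⟩
  -- a non-integer point between 0 and h x
  have key : ∀ c : ℝ, c ∈ h '' Set.univ → ∃ m : ℤ, c = m := by
    rintro c ⟨y, -, rfl⟩; exact hint y
  rcases lt_or_gt_of_ne hne with hlt | hgt
  · -- h x < 0, so h x ≤ -1
    have hk1 : (k : ℝ) ≤ -1 := by
      rw [hk] at hlt
      exact_mod_cast Int.le_of_lt_add_one (by exact_mod_cast (by linarith [hlt] : (k:ℝ) < 0))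
    have hmem : (-1/2 : ℝ) ∈ h '' Set.univ := by
      apply hord.out hxmem h0mem
      constructor <;> [rw [hk]; skip] <;> linarith
    obtain ⟨m, hm⟩ := key _ hmem
    have : (2 * m : ℤ) = -1 := by exact_mod_cast (by push_cast; linarith : ((2*m : ℤ) : ℝ) = -1)
    omega
  · have hk1 : (1 : ℝ) ≤ (k : ℝ) := by
      rw [hk] at hgt
      exact_mod_cast (by exact_mod_cast (by linarith [hgt] : (0:ℝ) < k) : (0:ℤ) < k)
    have hmem : (1/2 : ℝ) ∈ h '' Set.univ := by
      apply hord.out h0mem hxmem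
      constructor <;> [skip; rw [hk]] <;> linarith
    obtain ⟨m, hm⟩ := key _ hmem
    have : (2 * m : ℤ) = 1 := by exact_mod_cast (by push_cast; linarith : ((2*m : ℤ) : ℝ) = 1)
    omega

/-- Product of independent complex-valued random variables: the integral factorizes. -/
lemma aux_indep_integral_mul {Ω : Type*} [MeasurableSpace Ω] {μ : Measure Ω}
    [IsProbabilityMeasure μ] {X Y : Ω → ℂ} (h : IndepFun X Y μ)
    (hX : AEMeasurable X μ) (hY : AEMeasurable Y μ) :
    ∫ ω, X ω * Y ω ∂μ = (∫ ω, X ω ∂μ) * ∫ ω, Y ω ∂μ := by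
  have hmap := (indepFun_iff_map_prod_eq_prod_map_map hX hY).mp h
  have hXY : AEMeasurable (fun ω => (X ω, Y ω)) μ := hX.prodMk hY
  haveI : IsFiniteMeasure (μ.map X) := Measure.isFiniteMeasure_map μ X
  haveI : IsFiniteMeasure (μ.map Y) := Measure.isFiniteMeasure_map μ Y
  have h1 : ∫ p : ℂ × ℂ, p.1 * p.2 ∂(μ.map fun ω => (X ω, Y ω)) = ∫ ω, X ω * Y ω ∂μ :=
    integral_map hXY (continuous_fst.mul continuous_snd).aestronglyMeasurable
  rw [← h1, hmap]
  have h2 : ∫ p : ℂ × ℂ, p.1 * p.2 ∂((μ.map X).prod (μ.map Y))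
      = (∫ x, x ∂(μ.map X)) * ∫ y, y ∂(μ.map Y) :=
    integral_prod_mul (fun x => x) (fun y => y)
  have h3 : ∫ x : ℂ, x ∂(μ.map X) = ∫ ω, X ω ∂μ := integral_map hX aestronglyMeasurable_id
  have h4 : ∫ y : ℂ, y ∂(μ.map Y) = ∫ ω, Y ω ∂μ := integral_map hY aestronglyMeasurable_id
  rw [h2, h3, h4]

theorem log_charFun_functional_equation {n : ℕ} {Ω : Type*} [MeasurableSpace Ω]
    (μ : Measure Ω) [IsProbabilityMeasure μ]
    (ε : Ω → Fin n → ℝ) (hmeas : ∀ j, Measurable fun ω => ε ω j)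
    (hindep : iIndepFun (fun j ω => ε ω j) μ)
    (Θ : Matrix (Fin n) (Fin n) ℝ) (hΘ : IsUnit Θ)
    (P : Fin n → Matrix (Fin n) (Fin n) ℝ)
    (hP : ∀ j, P j = Matrix.of fun i k => Θ i j * Θ⁻¹ j k)
    (φ : (Fin n → ℝ) → ℂ)
    (hφ : ∀ s, φ s = ∫ ω, Complex.exp (Complex.I * ((s ⬝ᵥ Θ.mulVec (ε ω) : ℝ) : ℂ)) ∂μ)
    (hnv : ∀ s, φ s ≠ 0)
    (L : (Fin n → ℝ) → ℂ) (hLcont : Continuous L) (hL0 : L 0 = 0)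
    (hLexp : ∀ s, Complex.exp (L s) = φ s) :
    ∀ s, L s = ∑ j, L (Matrix.vecMul s (P j)) := by
  have hΘdet : IsUnit Θ.det := (Matrix.isUnit_iff_isUnit_det Θ).mp hΘ
  have hΘinv : Θ⁻¹ * Θ = 1 := Matrix.nonsing_inv_mul Θ hΘdet
  -- key algebraic identity
  have key : ∀ (s : Fin n → ℝ) (j : Fin n) (x : Fin n → ℝ),
      Matrix.vecMul s (P j) ⬝ᵥ Θ.mulVec x = (Matrix.vecMul s Θ) j * x j := by
    intro s j x
    have h1 : P j * Θ = Matrix.of fun i k => Θ i j * (1 : Matrix (Fin n) (Fin n) ℝ) j k := by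
      ext i k
      simp only [Matrix.mul_apply, hP, Matrix.of_apply, mul_assoc, ← Finset.mul_sum]
      rw [← Matrix.mul_apply, hΘinv]
    rw [Matrix.dotProduct_mulVec, Matrix.vecMul_vecMul, h1]
    simp [Matrix.vecMul, dotProduct, Matrix.one_apply, mul_ite,
      Finset.sum_ite_eq, Finset.sum_mul]
  -- product formula for φ
  have hprod : ∀ s : Fin n → ℝ, φ s = ∏ j, φ (Matrix.vecMul s (P j)) := by
    intro s
    set c : Fin n → ℝ := Matrix.vecMul s Θ with hc
    set g : Fin n → Ω → ℂ := fun j ω => Complex.exp (Complex.I * ((c j * ε ω j : ℝ) : ℂ))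
      with hg
    have hgmeas : ∀ j, Measurable (g j) := by
      intro j
      exact Complex.measurable_exp.comp
        (measurable_const.mul (Complex.measurable_ofReal.comp ((hmeas j).const_mul (c j))))
    have hgnorm : ∀ j ω, ‖g j ω‖ = 1 := by
      intro j ω
      simp [hg, Complex.norm_exp, Complex.mul_re]
    have hgint : ∀ j, Integrable (g j) μ := by
      intro j
      refine (integrable_const (1 : ℝ)).mono' (hgmeas j).aestronglyMeasurable ?_
      filter_upwards with ω
      rw [hgnorm j ω]
    have hgindep : iIndepFun g μ := by
      have := hindep.comp (fun j (x : ℝ) => Complex.exp (Complex.I * ((c j * x : ℝ) : ℂ)))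
        (fun j => Complex.measurable_exp.comp
          (measurable_const.mul (Complex.measurable_ofReal.comp (measurable_id.const_mul (c j)))))
      exact this
    -- integral of product over any finset
    have main : ∀ t : Finset (Fin n),
        Integrable (∏ j ∈ t, g j) μ ∧ ∫ ω, (∏ j ∈ t, g j) ω ∂μ = ∏ j ∈ t, ∫ ω, g j ω ∂μ := by
      intro t
      induction t using Finset.cons_induction with
      | empty =>
        refine ⟨?_, by simp⟩
        exact (integrable_const (1 : ℂ) : Integrable (1 : Ω → ℂ) μ)
      | cons i t hi ih =>
        have hIndep : IndepFun (∏ j ∈ t, g j) (g i) μ :=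
          hgindep.indepFun_finsetProd_of_notMem hgmeas hi
        have hmeas_prod : Measurable (∏ j ∈ t, g j) := by
          have hpe : (∏ j ∈ t, g j) = fun ω => ∏ j ∈ t, g j ω :=
            funext fun ω => Finset.prod_apply ω t g
          rw [hpe]
          exact Finset.measurable_prod t fun j _ => hgmeas j
        have hint : Integrable ((∏ j ∈ t, g j) * g i) μ :=
          hIndep.integrable_mul ih.1 (hgint i)
        have heq : (∏ j ∈ Finset.cons i t hi, g j) = (∏ j ∈ t, g j) * g i := by
          rw [Finset.prod_cons, mul_comm]
        constructor
        · rw [heq]; exact hint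
        · rw [heq, Finset.prod_cons]
          have hmul : ∫ ω, (∏ j ∈ t, g j) ω * g i ω ∂μ
              = (∫ ω, (∏ j ∈ t, g j) ω ∂μ) * ∫ ω, g i ω ∂μ :=
            aux_indep_integral_mul hIndep hmeas_prod.aemeasurable (hgmeas i).aemeasurable
          simp only [Pi.mul_apply]
          rw [hmul, ih.2, mul_comm]
    -- identify φ s with the integral of the full product
    have hφs : φ s = ∫ ω, (∏ j, g j) ω ∂μ := by
      rw [hφ s]
      congr 1
      funext ω
      have h1 : s ⬝ᵥ Θ.mulVec (ε ω) = ∑ j, c j * ε ω j := by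
        rw [Matrix.dotProduct_mulVec]; rfl
      rw [h1]
      simp only [Finset.prod_apply, hg, ← Complex.exp_sum]
      congr 1
      push_cast
      rw [Finset.mul_sum]
    have hφj : ∀ j, φ (Matrix.vecMul s (P j)) = ∫ ω, g j ω ∂μ := by
      intro j
      rw [hφ]
      congr 1
      funext ω
      rw [key s j (ε ω)]
    rw [hφs, (main Finset.univ).2]
    exact Finset.prod_congr rfl fun j _ => (hφj j).symm
  -- the discrepancy function
  set D : (Fin n → ℝ) → ℂ := fun s => L s - ∑ j, L (Matrix.vecMul s (P j)) with hD
  have hDexp : ∀ s, Complex.exp (D s) = 1 := by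
    intro s
    rw [hD]
    simp only
    rw [Complex.exp_sub, Complex.exp_sum]
    rw [hLexp s, hprod s]
    rw [div_eq_one_iff_eq (by
      apply Finset.prod_ne_zero_iff.mpr
      intro j _
      rw [hLexp]
      exact hnv _)]
    exact Finset.prod_congr rfl fun j _ => (hLexp _).symm
  have hDcont : Continuous D := by
    apply hLcont.sub
    apply continuous_finset_sum
    intro j _
    apply hLcont.comp
    apply continuous_pi
    intro k
    simp only [Matrix.vecMul, dotProduct]
    exact continuous_finset_sum _ fun i _ => (continuous_apply i).mul continuous_const
  have hD0 : D 0 = 0 := by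
    simp [hD, hL0, Matrix.zero_vecMul]
  -- imaginary part divided by 2π is integer valued
  have hDform : ∀ s, ∃ k : ℤ, D s = k * (2 * Real.pi * Complex.I) :=
    fun s => Complex.exp_eq_one_iff.mp (hDexp s)
  set h : (Fin n → ℝ) → ℝ := fun s => (D s).im / (2 * Real.pi) with hh
  have hpi : (2 * Real.pi) ≠ 0 := by positivity
  have hcont : Continuous h := (Complex.continuous_im.comp hDcont).div_const _
  have hint : ∀ s, ∃ k : ℤ, h s = k := by
    intro s
    obtain ⟨k, hk⟩ := hDform s
    refine ⟨k, ?_⟩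
    rw [hh]
    simp only
    rw [hk]
    have him : ((k : ℂ) * (2 * Real.pi * Complex.I)).im = k * (2 * Real.pi) := by
      simp [Complex.mul_im, Complex.mul_re]
    rw [him, mul_div_assoc, div_self (by positivity : (2 * Real.pi) ≠ 0), mul_one]
  have h0 : h 0 = 0 := by simp [hh, hD0]
  have hzero : ∀ s, h s = 0 := aux_int_valued_zero h hcont hint 0 h0
  intro s
  have hs := hzero s
  obtain ⟨k, hk⟩ := hDform s
  have hk0 : (k : ℝ) = 0 := by
    rw [hh] at hs
    simp only at hs
    rw [hk] at hs
    simp [Complex.mul_im] at hs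
    exact_mod_cast hs
  have : D s = 0 := by
    rw [hk]
    have : (k : ℂ) = 0 := by exact_mod_cast hk0
    rw [this, zero_mul]
  have := sub_eq_zero.mp this
  exact this
end
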